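/- Strong Nullstellensatz in finite fields: Let F_q be a finite field with q elements and let J be an ideal of F_q[x_1,...,x_n]. Then I(V(J)) = J + ⟨x_1^q − x_1, ..., x_n^q − x_n⟩, where V(J) = {a ∈ F_q^n : f(a) = 0 for all f ∈ J} is the affine variety of J over F_q itself, and I(V(J)) = {f ∈ F_q[x_1,...,x_n] : f(a) = 0 for all a ∈ V(J)} is its vanishing ideal. -/

import Mathlib

open MvPolynomial

private lemma aux_eval_span {n q : ℕ} {F : Type*} [Field F] [Fintype F]
    (hq : Fintype.card F = q) (a : Fin n → F) {h : MvPolynomial (Fin n) F}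
    (hh : h ∈ Ideal.span (Set.range fun i : Fin n =>
      (X i : MvPolynomial (Fin n) F) ^ q - X i)) :
    eval a h = 0 := by
  have hle : Ideal.span (Set.range fun i : Fin n =>
      (X i : MvPolynomial (Fin n) F) ^ q - X i) ≤ RingHom.ker (eval a) := by
    rw [Ideal.span_le]
    rintro _ ⟨i, rfl⟩
    simp only [SetLike.mem_coe, RingHom.mem_ker, map_sub, map_pow, eval_X]
    rw [← hq, FiniteField.pow_card, sub_self]
  exact hle hh

private lemma aux_pow_reduce {n q : ℕ} {F : Type*} [Field F] [Fintype F]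
    (hq : Fintype.card F = q) (i : Fin n) (e : ℕ) : ∃ e' ≤ q - 1,
    (X i : MvPolynomial (Fin n) F) ^ e - X i ^ e' ∈ Ideal.span (Set.range fun j : Fin n =>
      (X j : MvPolynomial (Fin n) F) ^ q - X j) := by
  have hq2 : 2 ≤ q := hq ▸ Fintype.one_lt_card
  induction e using Nat.strong_induction_on with
  | _ e ih =>
    by_cases he : e ≤ q - 1
    · exact ⟨e, he, by simp⟩
    · push_neg at he
      have heq : q ≤ e := by omega
      obtain ⟨e', he', hmem⟩ := ih (e - q + 1) (by omega)
      refine ⟨e', he', ?_⟩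
      have hid : (X i : MvPolynomial (Fin n) F) ^ e - X i ^ e' =
          X i ^ (e - q) * (X i ^ q - X i) + (X i ^ (e - q + 1) - X i ^ e') := by
        rw [mul_sub, ← pow_add, ← pow_succ]
        have h1 : e - q + q = e := by omega
        rw [h1]; ring
      rw [hid]
      exact add_mem (Ideal.mul_mem_left _ _ (Ideal.subset_span ⟨i, rfl⟩)) hmem

private lemma aux_reduce {n q : ℕ} {F : Type*} [Field F] [Fintype F]
    (hq : Fintype.card F = q) (p : MvPolynomial (Fin n) F) :
    ∃ r ∈ restrictDegree (Fin n) F (q - 1),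
      p - r ∈ Ideal.span (Set.range fun j : Fin n =>
        (X j : MvPolynomial (Fin n) F) ^ q - X j) := by
  classical
  set I := Ideal.span (Set.range fun j : Fin n =>
    (X j : MvPolynomial (Fin n) F) ^ q - X j) with hI
  induction p using MvPolynomial.induction_on' with
  | monomial d c =>
    choose e' he' hmem using fun i => aux_pow_reduce hq i (d i)
    set d' : Fin n →₀ ℕ := Finsupp.equivFunOnFinite.symm e' with hd'
    refine ⟨monomial d' c, ?_, ?_⟩
    · rw [mem_restrictDegree]
      intro s hs i
      have : s = d' := Finset.mem_singleton.mp (Finset.mem_of_subset support_monomial_subset hs)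
      subst this
      exact he' i
    · rw [← Ideal.Quotient.eq]
      have hm : ∀ (u : Fin n →₀ ℕ), (monomial u c : MvPolynomial (Fin n) F) =
          C c * ∏ i, X i ^ u i := by
        intro u
        rw [monomial_eq]
        congr 1
        exact Finsupp.prod_fintype _ _ (fun i => pow_zero _)
      rw [hm d, hm d', map_mul, map_mul, map_prod, map_prod]
      congr 1
      apply Finset.prod_congr rfl
      intro i _
      exact Ideal.Quotient.eq.mpr (hmem i)
  | add p1 p2 ih1 ih2 =>
    obtain ⟨r1, hr1, hm1⟩ := ih1
    obtain ⟨r2, hr2, hm2⟩ := ih2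
    refine ⟨r1 + r2, add_mem hr1 hr2, ?_⟩
    have : p1 + p2 - (r1 + r2) = (p1 - r1) + (p2 - r2) := by ring
    rw [this]
    exact add_mem hm1 hm2

universe u_aux in
private lemma aux_vanish_mem {n q : ℕ} {F : Type u_aux} [Field F] [Fintype F]
    (hq : Fintype.card F = q) (p : MvPolynomial (Fin n) F)
    (hp : ∀ a : Fin n → F, eval a p = 0) :
    p ∈ Ideal.span (Set.range fun j : Fin n =>
      (X j : MvPolynomial (Fin n) F) ^ q - X j) := by
  obtain ⟨r, hr, hpr⟩ := aux_reduce hq p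
  have hr' : r ∈ restrictDegree (Fin n) F (Fintype.card F - 1) := by rw [hq]; exact hr
  have hre : ∀ v : Fin n → F, eval v r = 0 := by
    intro v
    have h1 := aux_eval_span hq v hpr
    rw [map_sub, hp v, zero_sub, neg_eq_zero] at h1
    exact h1
  have hr0 : r = 0 := by
    set e : Fin n ≃ ULift.{u_aux} (Fin n) := Equiv.ulift.symm with he
    set r' : MvPolynomial (ULift.{u_aux} (Fin n)) F := rename e r with hrr
    have hre' : ∀ v : ULift.{u_aux} (Fin n) → F, eval v r' = 0 := by
      intro v
      rw [hrr, eval_rename]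
      exact hre _
    have hr'' : r' ∈ restrictDegree (ULift.{u_aux} (Fin n)) F (Fintype.card F - 1) := by
      rw [mem_restrictDegree]
      intro s hs i
      rw [hrr, support_rename_of_injective e.injective] at hs
      obtain ⟨t, ht, rfl⟩ := Finset.mem_image.mp hs
      have hi : i = e (e.symm i) := (e.apply_symm_apply i).symm
      rw [hi, Finsupp.mapDomain_apply e.injective]
      exact (mem_restrictDegree _ _ _).mp hr' t ht _
    have : r' = 0 := eq_zero_of_eval_eq_zero _ F r' hre' hr''
    have h0 : rename e r = rename e 0 := by rw [← hrr, this, map_zero]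
    exact rename_injective e e.injective h0
  rw [hr0, sub_zero] at hpr
  exact hpr

theorem strong_nullstellensatz_finite_field
    {F : Type*} [Field F] [Fintype F] {q : ℕ} (hq : Fintype.card F = q)
    (n : ℕ) (J : Ideal (MvPolynomial (Fin n) F)) (f : MvPolynomial (Fin n) F) :
    (∀ a : Fin n → F, (∀ g ∈ J, eval a g = 0) → eval a f = 0) ↔
      f ∈ J + Ideal.span (Set.range fun i : Fin n =>
        (X i : MvPolynomial (Fin n) F) ^ q - X i) := by
  classical
  set I := Ideal.span (Set.range fun i : Fin n =>
    (X i : MvPolynomial (Fin n) F) ^ q - X i) with hI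
  constructor
  · intro hf
    have hw : ∀ a : Fin n → F, ∃ w ∈ J,
        (eval a w = if (∀ g ∈ J, eval a g = 0) then 0 else 1) ∧
        ∀ b : Fin n → F, b ≠ a → eval b w = 0 := by
      intro a
      by_cases hVa : ∀ g ∈ J, eval a g = 0
      · exact ⟨0, J.zero_mem, by rw [if_pos hVa]; simp, by simp⟩
      · have hVa' := hVa
        push_neg at hVa'
        obtain ⟨g, hgJ, hg0⟩ := hVa'
        refine ⟨C (eval a g)⁻¹ * indicator a * g, J.mul_mem_left _ hgJ, ?_, ?_⟩
        · rw [if_neg hVa]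
          rw [map_mul, map_mul, eval_C, eval_indicator_apply_eq_one, mul_one,
            inv_mul_cancel₀ hg0]
        · intro b hb
          rw [map_mul, map_mul, eval_indicator_apply_eq_zero b a hb, mul_zero, zero_mul]
    choose w hwJ hwa hwb using hw
    set u : MvPolynomial (Fin n) F := ∑ a : Fin n → F, w a with hu
    have huJ : u ∈ J := Ideal.sum_mem J fun a _ => hwJ a
    have hue : ∀ b : Fin n → F, eval b u = if (∀ g ∈ J, eval b g = 0) then 0 else 1 := by
      intro b
      rw [hu, map_sum, Finset.sum_eq_single b
        (fun a _ hab => hwb a b (Ne.symm hab))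
        (fun h => absurd (Finset.mem_univ b) h)]
      exact hwa b
    have hvan : ∀ b : Fin n → F, eval b (f - f * u) = 0 := by
      intro b
      rw [map_sub, map_mul, hue b]
      by_cases hVb : ∀ g ∈ J, eval b g = 0
      · rw [if_pos hVb, mul_zero, sub_zero, hf b hVb]
      · rw [if_neg hVb, mul_one, sub_self]
    have h1 : f - f * u ∈ I := aux_vanish_mem hq _ hvan
    have h2 : f * u ∈ J := J.mul_mem_left f huJ
    have h3 : f * u + (f - f * u) = f := by ring
    rw [← h3, Ideal.add_eq_sup]
    exact add_mem (Ideal.mem_sup_left h2) (Ideal.mem_sup_right h1)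
  · intro hmem a ha
    rw [Ideal.add_eq_sup, Submodule.mem_sup] at hmem
    obtain ⟨g, hg, h, hh, rfl⟩ := hmem
    rw [map_add, ha g hg, aux_eval_span hq a hh, add_zero]
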